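/- arXiv:1506.05733 — 4 statements merged into one kernel-verified Lean document; each statement's English description precedes it below -/
import Mathlib

section
/- Let N(λ) denote the number of triples (ℓ,m,n) of positive integers with ℓ²+m²+n² < λ. Then for all λ ≥ 3, N(λ) > (π/6)λ^{3/2} − (3π/4)λ + 3√(λ−2) − 1. -/
open Real MeasureTheory Set

lemma sqrt_int_half : ∫ u in (0:ℝ)..1, Real.sqrt (1 - u ^ 2) = π / 4 := by
  have h := integral_sqrt_one_sub_sq
  have he : ∫ x in (-1:ℝ)..0, Real.sqrt (1 - x ^ 2) = ∫ x in (0:ℝ)..1, Real.sqrt (1 - x ^ 2) := by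
    have := intervalIntegral.integral_comp_neg (a := (0:ℝ)) (b := 1)
      (fun x => Real.sqrt (1 - x ^ 2))
    simp only [neg_neg, neg_zero, even_two.neg_pow] at this
    exact this.symm
  have hsplit : ∫ x in (-1:ℝ)..1, Real.sqrt (1 - x ^ 2)
      = (∫ x in (-1:ℝ)..0, Real.sqrt (1 - x ^ 2)) + ∫ x in (0:ℝ)..1, Real.sqrt (1 - x ^ 2) := by
    rw [intervalIntegral.integral_add_adjacent_intervals] <;>
    · apply ContinuousOn.intervalIntegrable
      fun_prop
  rw [hsplit, he] at h
  linarith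

lemma sqrt_int_scaled (r : ℝ) (hr : 0 ≤ r) :
    ∫ x in (0:ℝ)..r, Real.sqrt (r ^ 2 - x ^ 2) = π * r ^ 2 / 4 := by
  rcases eq_or_lt_of_le hr with h | h
  · simp [← h]
  have hc : r ≠ 0 := ne_of_gt h
  have key := intervalIntegral.integral_comp_mul_right
    (a := (0:ℝ)) (b := 1) (fun x => Real.sqrt (r ^ 2 - x ^ 2)) hc
  simp only [zero_mul, one_mul] at key
  have : (fun u : ℝ => Real.sqrt (r ^ 2 - (u * r) ^ 2)) = fun u => r * Real.sqrt (1 - u ^ 2) := by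
    ext u
    rw [show r ^ 2 - (u * r) ^ 2 = r ^ 2 * (1 - u ^ 2) by ring, Real.sqrt_mul (sq_nonneg r),
      Real.sqrt_sq hr]
  rw [this] at key
  rw [intervalIntegral.integral_const_mul, sqrt_int_half] at key
  have := key
  rw [smul_eq_mul] at this
  field_simp at this ⊢
  nlinarith [this]

lemma sec1 (t : ℝ) : volume {c : ℝ | 0 ≤ c ∧ c ^ 2 < t} = ENNReal.ofReal (Real.sqrt t) := by
  rcases le_or_gt t 0 with h | h
  · have : {c : ℝ | 0 ≤ c ∧ c ^ 2 < t} = ∅ := by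
      ext c; simp only [mem_setOf_eq, mem_empty_iff_false, iff_false, not_and, not_lt]
      intro hc; nlinarith
    rw [this, Real.sqrt_eq_zero_of_nonpos h]
    simp
  · have : {c : ℝ | 0 ≤ c ∧ c ^ 2 < t} = Ico 0 (Real.sqrt t) := by
      ext c
      simp only [mem_setOf_eq, mem_Ico]
      constructor
      · rintro ⟨h1, h2⟩; exact ⟨h1, (Real.lt_sqrt h1).mpr h2⟩
      · rintro ⟨h1, h2⟩; exact ⟨h1, (Real.lt_sqrt h1).mp h2⟩
    rw [this, Real.volume_Ico, sub_zero]

lemma Q_meas (ρ : ℝ) : MeasurableSet {p : ℝ × ℝ | 0 ≤ p.1 ∧ 0 ≤ p.2 ∧ p.1 ^ 2 + p.2 ^ 2 < ρ} := by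
  have h1 : MeasurableSet {p : ℝ × ℝ | 0 ≤ p.1} := measurableSet_le measurable_const measurable_fst
  have h2 : MeasurableSet {p : ℝ × ℝ | 0 ≤ p.2} := measurableSet_le measurable_const measurable_snd
  have h3 : MeasurableSet {p : ℝ × ℝ | p.1 ^ 2 + p.2 ^ 2 < ρ} :=
    measurableSet_lt (by fun_prop) measurable_const
  have : {p : ℝ × ℝ | 0 ≤ p.1 ∧ 0 ≤ p.2 ∧ p.1 ^ 2 + p.2 ^ 2 < ρ}
      = {p : ℝ × ℝ | 0 ≤ p.1} ∩ ({p : ℝ × ℝ | 0 ≤ p.2} ∩ {p : ℝ × ℝ | p.1 ^ 2 + p.2 ^ 2 < ρ}) := by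
    ext p; simp [mem_setOf_eq]
  rw [this]; exact h1.inter (h2.inter h3)

lemma Q_vol (ρ : ℝ) (hρ : 0 ≤ ρ) :
    volume {p : ℝ × ℝ | 0 ≤ p.1 ∧ 0 ≤ p.2 ∧ p.1 ^ 2 + p.2 ^ 2 < ρ}
      = ENNReal.ofReal (π * ρ / 4) := by
  rw [Measure.volume_eq_prod, Measure.prod_apply (Q_meas ρ)]
  have hsec : ∀ b : ℝ,
      volume (Prod.mk b ⁻¹' {p : ℝ × ℝ | 0 ≤ p.1 ∧ 0 ≤ p.2 ∧ p.1 ^ 2 + p.2 ^ 2 < ρ})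
      = ENNReal.ofReal ((Ico (0:ℝ) (Real.sqrt ρ)).indicator
          (fun b => Real.sqrt (ρ - b ^ 2)) b) := by
    intro b
    by_cases hb : b ∈ Ico (0:ℝ) (Real.sqrt ρ)
    · have hpre : Prod.mk b ⁻¹' {p : ℝ × ℝ | 0 ≤ p.1 ∧ 0 ≤ p.2 ∧ p.1 ^ 2 + p.2 ^ 2 < ρ}
          = {c : ℝ | 0 ≤ c ∧ c ^ 2 < ρ - b ^ 2} := by
        ext c
        simp only [mem_preimage, mem_setOf_eq, hb.1, true_and]
        constructor
        · rintro ⟨h1, h2⟩; exact ⟨h1, by linarith⟩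
        · rintro ⟨h1, h2⟩; exact ⟨h1, by linarith⟩
      rw [hpre, sec1, indicator_of_mem hb]
    · have hpre : Prod.mk b ⁻¹' {p : ℝ × ℝ | 0 ≤ p.1 ∧ 0 ≤ p.2 ∧ p.1 ^ 2 + p.2 ^ 2 < ρ}
          = (∅ : Set ℝ) := by
        ext c
        simp only [mem_preimage, mem_setOf_eq, mem_empty_iff_false, iff_false, not_and, not_lt]
        intro h1 h2
        have h : Real.sqrt ρ ≤ b := by
          simp only [mem_Ico, not_and, not_lt] at hb
          exact hb h1
        have : ρ ≤ b ^ 2 := by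
            calc ρ = Real.sqrt ρ ^ 2 := (Real.sq_sqrt hρ).symm
          _ ≤ b ^ 2 := by nlinarith [Real.sqrt_nonneg ρ]
        nlinarith
      rw [hpre, indicator_of_notMem hb]
      simp
  rw [lintegral_congr hsec]
  have hcont : Continuous (fun b : ℝ => Real.sqrt (ρ - b ^ 2)) := by fun_prop
  have hint : Integrable ((Ico (0:ℝ) (Real.sqrt ρ)).indicator
      (fun b => Real.sqrt (ρ - b ^ 2))) := by
    exact (hcont.integrableOn_Icc.mono_set Ico_subset_Icc_self).integrable_indicator
      measurableSet_Ico
  rw [← ofReal_integral_eq_lintegral_ofReal hint (Filter.Eventually.of_forall fun b =>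
    indicator_nonneg (fun x _ => Real.sqrt_nonneg _) b)]
  congr 1
  rw [integral_indicator measurableSet_Ico, MeasureTheory.integral_Ico_eq_integral_Ioo,
    ← MeasureTheory.integral_Ioc_eq_integral_Ioo,
    ← intervalIntegral.integral_of_le (Real.sqrt_nonneg ρ)]
  have := sqrt_int_scaled (Real.sqrt ρ) (Real.sqrt_nonneg ρ)
  rw [Real.sq_sqrt hρ] at this
  rw [this]

lemma lint_ofReal_ind (s : ℝ) (h0 : 0 ≤ s) (f : ℝ → ℝ) (hf : Continuous f)
    (hnn : ∀ a ∈ Ico (0:ℝ) s, 0 ≤ f a) :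
    ∫⁻ a, ENNReal.ofReal ((Ico (0:ℝ) s).indicator f a)
      = ENNReal.ofReal (∫ a in (0:ℝ)..s, f a) := by
  have hint : Integrable ((Ico (0:ℝ) s).indicator f) :=
    (hf.integrableOn_Icc.mono_set Ico_subset_Icc_self).integrable_indicator measurableSet_Ico
  rw [← ofReal_integral_eq_lintegral_ofReal hint
    (Filter.Eventually.of_forall fun b => indicator_nonneg (fun x hx => hnn x hx) b)]
  congr 1
  rw [integral_indicator measurableSet_Ico, MeasureTheory.integral_Ico_eq_integral_Ioo,
    ← MeasureTheory.integral_Ioc_eq_integral_Ioo, ← intervalIntegral.integral_of_le h0]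

lemma poly_int (lam s : ℝ) :
    ∫ x in (0:ℝ)..s, π * (lam - x ^ 2) / 4 = π / 4 * (lam * s - s ^ 3 / 3) := by
  have h1 : (fun x : ℝ => π * (lam - x ^ 2) / 4) = fun x : ℝ => (π / 4) * (lam - x ^ 2) := by
    ext x; ring
  rw [h1, intervalIntegral.integral_const_mul,
    intervalIntegral.integral_sub intervalIntegrable_const
      ((continuous_pow 2).intervalIntegrable _ _),
    intervalIntegral.integral_const, integral_pow]
  simp only [smul_eq_mul, sub_zero]
  rw [mul_comm]
  ring

def Oset (lam : ℝ) : Set (ℝ × ℝ × ℝ) :=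
  {p | 0 ≤ p.1 ∧ 0 ≤ p.2.1 ∧ 0 ≤ p.2.2 ∧ p.1 ^ 2 + p.2.1 ^ 2 + p.2.2 ^ 2 < lam}
def Xset (lam : ℝ) : Set (ℝ × ℝ × ℝ) := Oset lam ∩ {p | p.1 < 1}
def Yset (lam : ℝ) : Set (ℝ × ℝ × ℝ) := Oset lam ∩ {p | p.2.1 < 1}
def Zset (lam : ℝ) : Set (ℝ × ℝ × ℝ) := Oset lam ∩ {p | p.2.2 < 1}

lemma Oset_meas (lam : ℝ) : MeasurableSet (Oset lam) := by
  have h1 : MeasurableSet {p : ℝ × ℝ × ℝ | 0 ≤ p.1} :=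
    measurableSet_le measurable_const measurable_fst
  have h2 : MeasurableSet {p : ℝ × ℝ × ℝ | 0 ≤ p.2.1} :=
    measurableSet_le measurable_const (measurable_fst.comp measurable_snd)
  have h3 : MeasurableSet {p : ℝ × ℝ × ℝ | 0 ≤ p.2.2} :=
    measurableSet_le measurable_const (measurable_snd.comp measurable_snd)
  have h4 : MeasurableSet {p : ℝ × ℝ × ℝ | p.1 ^ 2 + p.2.1 ^ 2 + p.2.2 ^ 2 < lam} := by
    apply measurableSet_lt _ measurable_const
    exact ((measurable_fst.pow_const 2).add
      (((measurable_fst.comp measurable_snd).pow_const 2))).add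
      ((measurable_snd.comp measurable_snd).pow_const 2)
  have : Oset lam = {p : ℝ × ℝ × ℝ | 0 ≤ p.1} ∩ ({p | 0 ≤ p.2.1} ∩ ({p | 0 ≤ p.2.2} ∩
      {p | p.1 ^ 2 + p.2.1 ^ 2 + p.2.2 ^ 2 < lam})) := by
    ext p; simp [Oset, mem_setOf_eq]
  rw [this]; exact h1.inter (h2.inter (h3.inter h4))

lemma Xset_meas (lam : ℝ) : MeasurableSet (Xset lam) :=
  (Oset_meas lam).inter (measurableSet_lt measurable_fst measurable_const)
lemma Yset_meas (lam : ℝ) : MeasurableSet (Yset lam) :=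
  (Oset_meas lam).inter
    (measurableSet_lt (measurable_fst.comp measurable_snd) measurable_const)
lemma Zset_meas (lam : ℝ) : MeasurableSet (Zset lam) :=
  (Oset_meas lam).inter
    (measurableSet_lt (measurable_snd.comp measurable_snd) measurable_const)

lemma volume_Oset (lam : ℝ) (hlam : 3 ≤ lam) :
    volume (Oset lam) = ENNReal.ofReal (π / 6 * (lam * Real.sqrt lam)) := by
  have hlam0 : (0:ℝ) ≤ lam := by linarith
  rw [Measure.volume_eq_prod, Measure.prod_apply (Oset_meas lam)]
  have hsec : ∀ a : ℝ, volume (Prod.mk a ⁻¹' Oset lam)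
      = ENNReal.ofReal ((Ico (0:ℝ) (Real.sqrt lam)).indicator
          (fun a => π * (lam - a ^ 2) / 4) a) := by
    intro a
    by_cases ha : a ∈ Ico (0:ℝ) (Real.sqrt lam)
    · have ha2 : a ^ 2 < lam := (Real.lt_sqrt ha.1).mp ha.2
      have hpre : Prod.mk a ⁻¹' Oset lam
          = {q : ℝ × ℝ | 0 ≤ q.1 ∧ 0 ≤ q.2 ∧ q.1 ^ 2 + q.2 ^ 2 < lam - a ^ 2} := by
        ext q
        simp only [mem_preimage, Oset, mem_setOf_eq, ha.1, true_and]
        constructor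
        · rintro ⟨h1, h2, h3⟩; exact ⟨h1, h2, by linarith⟩
        · rintro ⟨h1, h2, h3⟩; exact ⟨h1, h2, by linarith⟩
      rw [hpre, Q_vol _ (by linarith), indicator_of_mem ha]
    · have hpre : Prod.mk a ⁻¹' Oset lam = (∅ : Set (ℝ × ℝ)) := by
        ext q
        simp only [mem_preimage, Oset, mem_setOf_eq, mem_empty_iff_false, iff_false, not_and,
          not_lt]
        intro h1 h2 h3
        have h : Real.sqrt lam ≤ a := by
          simp only [mem_Ico, not_and, not_lt] at ha
          exact ha h1
        have : lam ≤ a ^ 2 := by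
          calc lam = Real.sqrt lam ^ 2 := (Real.sq_sqrt hlam0).symm
          _ ≤ a ^ 2 := by nlinarith [Real.sqrt_nonneg lam]
        nlinarith
      rw [hpre, indicator_of_notMem ha]
      simp
  rw [lintegral_congr hsec, lint_ofReal_ind _ (Real.sqrt_nonneg lam) _ (by fun_prop)
    (fun a ha => by
      have h1 : a ^ 2 < lam := (Real.lt_sqrt ha.1).mp ha.2
      have h2 : 0 ≤ lam - a ^ 2 := by linarith
      positivity), poly_int]
  congr 1
  have h := Real.sq_sqrt hlam0
  have h3 : Real.sqrt lam ^ 3 = lam * Real.sqrt lam := by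
    rw [pow_succ, h]
  rw [h3]
  ring

lemma volume_Xset (lam : ℝ) (hlam : 3 ≤ lam) :
    volume (Xset lam) = ENNReal.ofReal (π / 4 * (lam - 1 / 3)) := by
  rw [Measure.volume_eq_prod, Measure.prod_apply (Xset_meas lam)]
  have hsec : ∀ a : ℝ, volume (Prod.mk a ⁻¹' Xset lam)
      = ENNReal.ofReal ((Ico (0:ℝ) 1).indicator (fun a => π * (lam - a ^ 2) / 4) a) := by
    intro a
    by_cases ha : a ∈ Ico (0:ℝ) 1
    · have hpre : Prod.mk a ⁻¹' Xset lam
          = {q : ℝ × ℝ | 0 ≤ q.1 ∧ 0 ≤ q.2 ∧ q.1 ^ 2 + q.2 ^ 2 < lam - a ^ 2} := by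
        ext q
        simp only [mem_preimage, Xset, Oset, mem_inter_iff, mem_setOf_eq, ha.1, ha.2, true_and,
          and_true]
        constructor
        · rintro ⟨h1, h2, h3⟩; exact ⟨h1, h2, by linarith⟩
        · rintro ⟨h1, h2, h3⟩; exact ⟨h1, h2, by linarith⟩
      have ha2 : a ^ 2 < 1 := by nlinarith [ha.1, ha.2]
      rw [hpre, Q_vol _ (by linarith), indicator_of_mem ha]
    · have hpre : Prod.mk a ⁻¹' Xset lam = (∅ : Set (ℝ × ℝ)) := by
        ext q
        simp only [mem_preimage, Xset, Oset, mem_inter_iff, mem_setOf_eq, mem_empty_iff_false,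
          iff_false, not_and, not_lt]
        simp only [mem_Ico, not_and, not_lt] at ha
        rintro ⟨h1, h2, h3, h4⟩
        exact ha h1
      rw [hpre, indicator_of_notMem ha]
      simp
  rw [lintegral_congr hsec, lint_ofReal_ind _ zero_le_one _ (by fun_prop)
    (fun a ha => by
      have : a ^ 2 < 1 := by nlinarith [ha.1, ha.2]
      have : 0 ≤ lam - a ^ 2 := by linarith
      positivity), poly_int]
  congr 1
  ring

lemma volume_Yset_le (lam : ℝ) (hlam : 3 ≤ lam) :
    volume (Yset lam) ≤ ENNReal.ofReal (π * lam / 4) := by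
  have hlam0 : (0:ℝ) ≤ lam := by linarith
  rw [Measure.volume_eq_prod, Measure.prod_apply (Yset_meas lam)]
  have hpt : ∀ a : ℝ, volume (Prod.mk a ⁻¹' Yset lam)
      ≤ ENNReal.ofReal ((Ico (0:ℝ) (Real.sqrt lam)).indicator
          (fun a => Real.sqrt (lam - a ^ 2)) a) := by
    intro a
    by_cases ha : a ∈ Ico (0:ℝ) (Real.sqrt lam)
    · have hsub : Prod.mk a ⁻¹' Yset lam
          ⊆ Ico (0:ℝ) 1 ×ˢ {c : ℝ | 0 ≤ c ∧ c ^ 2 < lam - a ^ 2} := by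
        rintro q ⟨⟨h1, h2, h3, h4⟩, h5⟩
        refine ⟨⟨h2, h5⟩, h3, by nlinarith⟩
      refine (measure_mono hsub).trans ?_
      rw [Measure.volume_eq_prod, Measure.prod_prod, Real.volume_Ico, sec1,
        indicator_of_mem ha]
      simp
    · have hpre : Prod.mk a ⁻¹' Yset lam = (∅ : Set (ℝ × ℝ)) := by
        ext q
        simp only [mem_preimage, Yset, Oset, mem_inter_iff, mem_setOf_eq, mem_empty_iff_false,
          iff_false, not_and, not_lt]
        rintro ⟨h1, h2, h3, h4⟩
        exfalso
        have h : Real.sqrt lam ≤ a := by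
          simp only [mem_Ico, not_and, not_lt] at ha
          exact ha h1
        have : lam ≤ a ^ 2 := by
          calc lam = Real.sqrt lam ^ 2 := (Real.sq_sqrt hlam0).symm
          _ ≤ a ^ 2 := by nlinarith [Real.sqrt_nonneg lam]
        nlinarith
      rw [hpre]
      simp
  refine (lintegral_mono hpt).trans_eq ?_
  rw [lint_ofReal_ind _ (Real.sqrt_nonneg lam) _ (by fun_prop)
    (fun a _ => Real.sqrt_nonneg _)]
  congr 1
  have h := sqrt_int_scaled (Real.sqrt lam) (Real.sqrt_nonneg lam)
  rw [Real.sq_sqrt hlam0] at h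
  rw [h]

lemma volume_Zset_le (lam : ℝ) (hlam : 3 ≤ lam) :
    volume (Zset lam) ≤ ENNReal.ofReal (π * lam / 4) := by
  have hlam0 : (0:ℝ) ≤ lam := by linarith
  rw [Measure.volume_eq_prod, Measure.prod_apply (Zset_meas lam)]
  have hpt : ∀ a : ℝ, volume (Prod.mk a ⁻¹' Zset lam)
      ≤ ENNReal.ofReal ((Ico (0:ℝ) (Real.sqrt lam)).indicator
          (fun a => Real.sqrt (lam - a ^ 2)) a) := by
    intro a
    by_cases ha : a ∈ Ico (0:ℝ) (Real.sqrt lam)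
    · have hsub : Prod.mk a ⁻¹' Zset lam
          ⊆ {c : ℝ | 0 ≤ c ∧ c ^ 2 < lam - a ^ 2} ×ˢ Ico (0:ℝ) 1 := by
        rintro q ⟨⟨h1, h2, h3, h4⟩, h5⟩
        refine ⟨⟨h2, by nlinarith⟩, h3, h5⟩
      refine (measure_mono hsub).trans ?_
      rw [Measure.volume_eq_prod, Measure.prod_prod, Real.volume_Ico, sec1,
        indicator_of_mem ha]
      simp
    · have hpre : Prod.mk a ⁻¹' Zset lam = (∅ : Set (ℝ × ℝ)) := by
        ext q
        simp only [mem_preimage, Zset, Oset, mem_inter_iff, mem_setOf_eq, mem_empty_iff_false,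
          iff_false, not_and, not_lt]
        rintro ⟨h1, h2, h3, h4⟩
        exfalso
        have h : Real.sqrt lam ≤ a := by
          simp only [mem_Ico, not_and, not_lt] at ha
          exact ha h1
        have : lam ≤ a ^ 2 := by
          calc lam = Real.sqrt lam ^ 2 := (Real.sq_sqrt hlam0).symm
          _ ≤ a ^ 2 := by nlinarith [Real.sqrt_nonneg lam]
        nlinarith
      rw [hpre]
      simp
  refine (lintegral_mono hpt).trans_eq ?_
  rw [lint_ofReal_ind _ (Real.sqrt_nonneg lam) _ (by fun_prop)
    (fun a _ => Real.sqrt_nonneg _)]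
  congr 1
  have h := sqrt_int_scaled (Real.sqrt lam) (Real.sqrt_nonneg lam)
  rw [Real.sq_sqrt hlam0] at h
  rw [h]

lemma vol_prod3 (s t u : Set ℝ) :
    volume (s ×ˢ (t ×ˢ u)) = volume s * (volume t * volume u) := by
  rw [Measure.volume_eq_prod, Measure.prod_prod, Measure.volume_eq_prod, Measure.prod_prod]

lemma XY_lb (lam : ℝ) (hlam : 3 ≤ lam) :
    ENNReal.ofReal (Real.sqrt (lam - 2)) ≤ volume (Xset lam ∩ Yset lam) := by
  have hsub : Ico (0:ℝ) 1 ×ˢ (Ico (0:ℝ) 1 ×ˢ Ico (0:ℝ) (Real.sqrt (lam - 2)))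
      ⊆ Xset lam ∩ Yset lam := by
    rintro ⟨a, b, c⟩ ⟨⟨ha0, ha1⟩, ⟨hb0, hb1⟩, ⟨hc0, hc1⟩⟩
    have hc2 : c ^ 2 < lam - 2 := (Real.lt_sqrt hc0).mp hc1
    have hO : (a, b, c) ∈ Oset lam := ⟨ha0, hb0, hc0, by nlinarith⟩
    exact ⟨⟨hO, ha1⟩, hO, hb1⟩
  refine le_trans ?_ (measure_mono hsub)
  rw [vol_prod3]
  simp [Real.volume_Ico]

lemma XZ_lb (lam : ℝ) (hlam : 3 ≤ lam) :
    ENNReal.ofReal (Real.sqrt (lam - 2)) ≤ volume (Xset lam ∩ Zset lam) := by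
  have hsub : Ico (0:ℝ) 1 ×ˢ (Ico (0:ℝ) (Real.sqrt (lam - 2)) ×ˢ Ico (0:ℝ) 1)
      ⊆ Xset lam ∩ Zset lam := by
    rintro ⟨a, b, c⟩ ⟨⟨ha0, ha1⟩, ⟨hb0, hb1⟩, ⟨hc0, hc1⟩⟩
    have hb2 : b ^ 2 < lam - 2 := (Real.lt_sqrt hb0).mp hb1
    have hO : (a, b, c) ∈ Oset lam := ⟨ha0, hb0, hc0, by nlinarith⟩
    exact ⟨⟨hO, ha1⟩, hO, hc1⟩
  refine le_trans ?_ (measure_mono hsub)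
  rw [vol_prod3]
  simp [Real.volume_Ico]

lemma YZ_lb (lam : ℝ) (hlam : 3 ≤ lam) :
    ENNReal.ofReal (Real.sqrt (lam - 2)) ≤ volume (Yset lam ∩ Zset lam) := by
  have hsub : Ico (0:ℝ) (Real.sqrt (lam - 2)) ×ˢ (Ico (0:ℝ) 1 ×ˢ Ico (0:ℝ) 1)
      ⊆ Yset lam ∩ Zset lam := by
    rintro ⟨a, b, c⟩ ⟨⟨ha0, ha1⟩, ⟨hb0, hb1⟩, ⟨hc0, hc1⟩⟩
    have ha2 : a ^ 2 < lam - 2 := (Real.lt_sqrt ha0).mp ha1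
    have hO : (a, b, c) ∈ Oset lam := ⟨ha0, hb0, hc0, by nlinarith⟩
    exact ⟨⟨hO, hb1⟩, hO, hc1⟩
  refine le_trans ?_ (measure_mono hsub)
  rw [vol_prod3]
  simp [Real.volume_Ico]

lemma XYZ_ub (lam : ℝ) :
    volume (Xset lam ∩ Yset lam ∩ Zset lam) ≤ 1 := by
  have hsub : Xset lam ∩ Yset lam ∩ Zset lam
      ⊆ Ico (0:ℝ) 1 ×ˢ (Ico (0:ℝ) 1 ×ˢ Ico (0:ℝ) 1) := by
    rintro ⟨a, b, c⟩ ⟨⟨⟨hO, hx⟩, _, hy⟩, _, hz⟩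
    exact ⟨⟨hO.1, hx⟩, ⟨hO.2.1, hy⟩, hO.2.2.1, hz⟩
  refine (measure_mono hsub).trans_eq ?_
  rw [vol_prod3]
  simp [Real.volume_Ico]

lemma IE {α : Type*} [MeasurableSpace α] (μ : Measure α) (O X Y Z : Set α)
    (hX : MeasurableSet X) (hY : MeasurableSet Y) (hZ : MeasurableSet Z)
    (hXO : X ⊆ O) (hYO : Y ⊆ O) (hZO : Z ⊆ O) :
    μ O + μ (X ∩ Y) + μ (X ∩ Z) + μ (Y ∩ Z)
      = μ (O \ (X ∪ Y ∪ Z)) + μ X + μ Y + μ Z + μ (X ∩ Y ∩ Z) := by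
  have hU : MeasurableSet (X ∪ Y ∪ Z) := (hX.union hY).union hZ
  have h1 : μ O = μ (O \ (X ∪ Y ∪ Z)) + μ (X ∪ Y ∪ Z) := by
    rw [← measure_union (disjoint_sdiff_left) hU, diff_union_self,
      union_eq_self_of_subset_right (union_subset (union_subset hXO hYO) hZO)]
  have h2 : μ (X ∪ Y ∪ Z) + μ ((X ∪ Y) ∩ Z) = μ (X ∪ Y) + μ Z :=
    measure_union_add_inter (X ∪ Y) hZ
  have h3 : μ ((X ∩ Z) ∪ (Y ∩ Z)) + μ (X ∩ Y ∩ Z) = μ (X ∩ Z) + μ (Y ∩ Z) := by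
    have := measure_union_add_inter (μ := μ) (X ∩ Z) (hY.inter hZ)
    have he : (X ∩ Z) ∩ (Y ∩ Z) = X ∩ Y ∩ Z := by ext p; simp [mem_inter_iff]; tauto
    rw [he] at this
    exact this
  have h4 : μ (X ∪ Y) + μ (X ∩ Y) = μ X + μ Y := measure_union_add_inter X hY
  have hdist : (X ∪ Y) ∩ Z = (X ∩ Z) ∪ (Y ∩ Z) := union_inter_distrib_right X Y Z
  rw [h1]
  calc μ (O \ (X ∪ Y ∪ Z)) + μ (X ∪ Y ∪ Z) + μ (X ∩ Y) + μ (X ∩ Z) + μ (Y ∩ Z)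
      = μ (O \ (X ∪ Y ∪ Z)) + μ (X ∩ Y) + (μ (X ∪ Y ∪ Z) + (μ (X ∩ Z) + μ (Y ∩ Z))) := by ring
    _ = μ (O \ (X ∪ Y ∪ Z)) + μ (X ∩ Y) + (μ (X ∪ Y ∪ Z) + (μ ((X ∪ Y) ∩ Z) + μ (X ∩ Y ∩ Z))) := by
        rw [← h3, hdist]
    _ = μ (O \ (X ∪ Y ∪ Z)) + μ (X ∩ Y) + ((μ (X ∪ Y ∪ Z) + μ ((X ∪ Y) ∩ Z)) + μ (X ∩ Y ∩ Z)) := by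
        ring
    _ = μ (O \ (X ∪ Y ∪ Z)) + μ (X ∩ Y) + ((μ (X ∪ Y) + μ Z) + μ (X ∩ Y ∩ Z)) := by rw [h2]
    _ = μ (O \ (X ∪ Y ∪ Z)) + ((μ (X ∪ Y) + μ (X ∩ Y)) + μ Z + μ (X ∩ Y ∩ Z)) := by ring
    _ = μ (O \ (X ∪ Y ∪ Z)) + μ X + μ Y + μ Z + μ (X ∩ Y ∩ Z) := by rw [h4]; ring

def Sset (lam : ℝ) : Set (ℕ × ℕ × ℕ) :=
  {p | 1 ≤ p.1 ∧ 1 ≤ p.2.1 ∧ 1 ≤ p.2.2 ∧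
    ((p.1 : ℝ) ^ 2 + (p.2.1 : ℝ) ^ 2 + (p.2.2 : ℝ) ^ 2) < lam}


lemma Sset_finite (lam : ℝ) : (Sset lam).Finite := by
  set M := ⌈lam⌉₊ with hM
  apply Set.Finite.subset
    ((Finset.range (M + 1) ×ˢ Finset.range (M + 1) ×ˢ Finset.range (M + 1)).finite_toSet)
  rintro ⟨a, b, c⟩ ⟨h1, h2, h3, h4⟩
  have key : ∀ n : ℕ, 1 ≤ n → (n : ℝ) ^ 2 ≤ lam → n < M + 1 := by
    intro n hn hsq
    have h1 : (n : ℝ) ≤ (n : ℝ) ^ 2 := by nlinarith [(Nat.one_le_cast (α := ℝ)).mpr hn]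
    have h2 : (n : ℝ) ≤ (M : ℝ) := le_trans (le_trans h1 hsq) (Nat.le_ceil lam)
    exact Nat.lt_succ_of_le (Nat.cast_le.mp h2)
  simp only [Finset.coe_product, Finset.coe_range, mem_prod, mem_Iio]
  refine ⟨key a h1 (by nlinarith [sq_nonneg (b:ℝ), sq_nonneg (c:ℝ)]),
    key b h2 (by nlinarith [sq_nonneg (a:ℝ), sq_nonneg (c:ℝ)]),
    key c h3 (by nlinarith [sq_nonneg (a:ℝ), sq_nonneg (b:ℝ)])⟩

lemma count_ge (lam : ℝ) :
    volume (Oset lam \ (Xset lam ∪ Yset lam ∪ Zset lam))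
      ≤ (((Sset lam).ncard : ℕ) : ENNReal) := by
  have hfin := Sset_finite lam
  set F := hfin.toFinset with hF
  set cube : ℕ × ℕ × ℕ → Set (ℝ × ℝ × ℝ) := fun p =>
    Ico (p.1 : ℝ) ((p.1 : ℝ) + 1) ×ˢ
      (Ico (p.2.1 : ℝ) ((p.2.1 : ℝ) + 1) ×ˢ Ico (p.2.2 : ℝ) ((p.2.2 : ℝ) + 1)) with hcube
  have hcover : Oset lam \ (Xset lam ∪ Yset lam ∪ Zset lam) ⊆ ⋃ p ∈ F, cube p := by
    intro x hx
    have hO := hx.1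
    have hx1 : (1:ℝ) ≤ x.1 := by
      by_contra h
      exact hx.2 (Or.inl (Or.inl ⟨hO, lt_of_not_ge h⟩))
    have hx2 : (1:ℝ) ≤ x.2.1 := by
      by_contra h
      exact hx.2 (Or.inl (Or.inr ⟨hO, lt_of_not_ge h⟩))
    have hx3 : (1:ℝ) ≤ x.2.2 := by
      by_contra h
      exact hx.2 (Or.inr ⟨hO, lt_of_not_ge h⟩)
    have h01 : (0:ℝ) ≤ x.1 := by linarith
    have h02 : (0:ℝ) ≤ x.2.1 := by linarith
    have h03 : (0:ℝ) ≤ x.2.2 := by linarith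
    refine mem_biUnion (x := (⌊x.1⌋₊, ⌊x.2.1⌋₊, ⌊x.2.2⌋₊)) ?_ ?_
    · have hmem : (⌊x.1⌋₊, ⌊x.2.1⌋₊, ⌊x.2.2⌋₊) ∈ Sset lam := by
        refine ⟨Nat.le_floor (by exact_mod_cast hx1), Nat.le_floor (by exact_mod_cast hx2),
          Nat.le_floor (by exact_mod_cast hx3), ?_⟩
        have b1 : ((⌊x.1⌋₊ : ℝ)) ^ 2 ≤ x.1 ^ 2 :=
          pow_le_pow_left₀ (Nat.cast_nonneg _) (Nat.floor_le h01) 2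
        have b2 : ((⌊x.2.1⌋₊ : ℝ)) ^ 2 ≤ x.2.1 ^ 2 :=
          pow_le_pow_left₀ (Nat.cast_nonneg _) (Nat.floor_le h02) 2
        have b3 : ((⌊x.2.2⌋₊ : ℝ)) ^ 2 ≤ x.2.2 ^ 2 :=
          pow_le_pow_left₀ (Nat.cast_nonneg _) (Nat.floor_le h03) 2
        have := hO.2.2.2
        linarith
      exact (hfin.mem_toFinset).mpr hmem
    · exact ⟨⟨Nat.floor_le h01, Nat.lt_floor_add_one x.1⟩,
        ⟨Nat.floor_le h02, Nat.lt_floor_add_one x.2.1⟩,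
        ⟨Nat.floor_le h03, Nat.lt_floor_add_one x.2.2⟩⟩
  calc volume (Oset lam \ (Xset lam ∪ Yset lam ∪ Zset lam))
      ≤ volume (⋃ p ∈ F, cube p) := measure_mono hcover
    _ ≤ ∑ p ∈ F, volume (cube p) := measure_biUnion_finset_le F cube
    _ = ∑ p ∈ F, 1 := by
        refine Finset.sum_congr rfl fun p _ => ?_
        rw [hcube]
        simp only
        rw [vol_prod3]
        simp [Real.volume_Ico]
    _ = (F.card : ENNReal) := by simp
    _ = ((Sset lam).ncard : ENNReal) := by
        rw [Set.ncard_eq_toFinset_card _ hfin]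

theorem counting_function_lower_bound (lam : ℝ) (hlam : 3 ≤ lam) :
    (Nat.card {p : ℕ × ℕ × ℕ // 1 ≤ p.1 ∧ 1 ≤ p.2.1 ∧ 1 ≤ p.2.2 ∧
        ((p.1 : ℝ)^2 + (p.2.1 : ℝ)^2 + (p.2.2 : ℝ)^2) < lam} : ℝ)
      > π / 6 * lam ^ ((3 : ℝ) / 2) - 3 * π / 4 * lam + 3 * Real.sqrt (lam - 2) - 1 := by
  have h0 : (0:ℝ) < lam := by linarith
  have hNcard : Nat.card {p : ℕ × ℕ × ℕ // 1 ≤ p.1 ∧ 1 ≤ p.2.1 ∧ 1 ≤ p.2.2 ∧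
      ((p.1 : ℝ)^2 + (p.2.1 : ℝ)^2 + (p.2.2 : ℝ)^2) < lam} = (Sset lam).ncard :=
    Nat.card_coe_set_eq (Sset lam)
  set N : ℕ := (Sset lam).ncard with hN
  rw [hNcard]
  have hsq0 : (0:ℝ) ≤ Real.sqrt (lam - 2) := Real.sqrt_nonneg _
  have hsqlam : (0:ℝ) ≤ Real.sqrt lam := Real.sqrt_nonneg _
  have key : ENNReal.ofReal (π / 6 * (lam * Real.sqrt lam)) +
        ENNReal.ofReal (Real.sqrt (lam - 2)) + ENNReal.ofReal (Real.sqrt (lam - 2)) +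
        ENNReal.ofReal (Real.sqrt (lam - 2))
      ≤ (N : ENNReal) + ENNReal.ofReal (π / 4 * (lam - 1 / 3)) +
        ENNReal.ofReal (π * lam / 4) + ENNReal.ofReal (π * lam / 4) + 1 := by
    calc ENNReal.ofReal (π / 6 * (lam * Real.sqrt lam)) +
          ENNReal.ofReal (Real.sqrt (lam - 2)) + ENNReal.ofReal (Real.sqrt (lam - 2)) +
          ENNReal.ofReal (Real.sqrt (lam - 2))
        ≤ volume (Oset lam) + volume (Xset lam ∩ Yset lam) + volume (Xset lam ∩ Zset lam) +
            volume (Yset lam ∩ Zset lam) := by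
          rw [volume_Oset lam hlam]
          gcongr
          · exact XY_lb lam hlam
          · exact XZ_lb lam hlam
          · exact YZ_lb lam hlam
      _ = volume (Oset lam \ (Xset lam ∪ Yset lam ∪ Zset lam)) + volume (Xset lam) +
            volume (Yset lam) + volume (Zset lam) +
            volume (Xset lam ∩ Yset lam ∩ Zset lam) :=
          IE volume (Oset lam) (Xset lam) (Yset lam) (Zset lam) (Xset_meas lam)
            (Yset_meas lam) (Zset_meas lam) inter_subset_left inter_subset_left
            inter_subset_left
      _ ≤ (N : ENNReal) + ENNReal.ofReal (π / 4 * (lam - 1 / 3)) +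
            ENNReal.ofReal (π * lam / 4) + ENNReal.ofReal (π * lam / 4) + 1 := by
          gcongr
          · exact count_ge lam
          · exact le_of_eq (volume_Xset lam hlam)
          · exact volume_Yset_le lam hlam
          · exact volume_Zset_le lam hlam
          · exact XYZ_ub lam
  have hpos1 : (0:ℝ) ≤ π / 6 * (lam * Real.sqrt lam) := by positivity
  have hpos2 : (0:ℝ) ≤ π / 4 * (lam - 1 / 3) := by
    have : (0:ℝ) < π := pi_pos
    nlinarith
  have hpos3 : (0:ℝ) ≤ π * lam / 4 := by positivity
  have e1 : ENNReal.ofReal (π / 6 * (lam * Real.sqrt lam)) +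
        ENNReal.ofReal (Real.sqrt (lam - 2)) + ENNReal.ofReal (Real.sqrt (lam - 2)) +
        ENNReal.ofReal (Real.sqrt (lam - 2))
      = ENNReal.ofReal (π / 6 * (lam * Real.sqrt lam) + Real.sqrt (lam - 2) +
          Real.sqrt (lam - 2) + Real.sqrt (lam - 2)) := by
    rw [← ENNReal.ofReal_add (by positivity) hsq0, ← ENNReal.ofReal_add (by positivity) hsq0,
      ← ENNReal.ofReal_add (by positivity) hsq0]
  have e2 : (N : ENNReal) + ENNReal.ofReal (π / 4 * (lam - 1 / 3)) +
        ENNReal.ofReal (π * lam / 4) + ENNReal.ofReal (π * lam / 4) + 1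
      = ENNReal.ofReal ((N : ℝ) + π / 4 * (lam - 1 / 3) + π * lam / 4 + π * lam / 4 + 1) := by
    rw [← ENNReal.ofReal_natCast N, ← ENNReal.ofReal_one,
      ← ENNReal.ofReal_add (Nat.cast_nonneg N) hpos2,
      ← ENNReal.ofReal_add (by positivity) hpos3,
      ← ENNReal.ofReal_add (by positivity) hpos3,
      ← ENNReal.ofReal_add (by positivity) zero_le_one]
  rw [e1, e2] at key
  have hreal : π / 6 * (lam * Real.sqrt lam) + Real.sqrt (lam - 2) + Real.sqrt (lam - 2) +
        Real.sqrt (lam - 2)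
      ≤ (N : ℝ) + π / 4 * (lam - 1 / 3) + π * lam / 4 + π * lam / 4 + 1 :=
    (ENNReal.ofReal_le_ofReal_iff (by positivity)).mp key
  have hrpow : lam ^ ((3 : ℝ) / 2) = lam * Real.sqrt lam := by
    rw [show (3:ℝ)/2 = 1 + 1/2 by norm_num, Real.rpow_add h0, Real.rpow_one,
      ← Real.sqrt_eq_rpow]
  rw [hrpow]
  have hπ : (0:ℝ) < π := pi_pos
  nlinarith [hreal, hπ]
end

section
/- Let N(λ) denote the number of triples (ℓ,m,n) of positive integers with ℓ²+m²+n² < λ. Then N(λ) ≤ (π/6)λ^{3/2} for all λ > 0. -/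
open Real MeasureTheory Set

namespace CFUB

/-- coordinates of a triple as a function `Fin 3 → ℕ`. -/
def q (p : ℕ × ℕ × ℕ) : Fin 3 → ℕ := ![p.1, p.2.1, p.2.2]

lemma q_inj : Function.Injective q := by
  intro p p' h
  have h0 := congrFun h 0
  have h1 := congrFun h 1
  have h2 := congrFun h 2
  simp [q] at h0 h1 h2
  exact Prod.ext h0 (Prod.ext h1 h2)

/-- the (possibly reflected) unit cube attached to a lattice point -/
def cube (s : Fin 3 → Bool) (p : ℕ × ℕ × ℕ) : Set (Fin 3 → ℝ) :=
  univ.pi fun i => if s i then Ioc ((q p i : ℝ) - 1) (q p i)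
    else Ico (-(q p i : ℝ)) (1 - (q p i : ℝ))

lemma interval_lemma {s s' : Bool} {a b : ℕ} (ha : 1 ≤ a) (hb : 1 ≤ b) {x : ℝ}
    (hx : x ∈ (if s then Ioc ((a : ℝ) - 1) a else Ico (-(a : ℝ)) (1 - (a : ℝ))))
    (hx' : x ∈ (if s' then Ioc ((b : ℝ) - 1) b else Ico (-(b : ℝ)) (1 - (b : ℝ)))) :
    s = s' ∧ a = b := by
  have ha' : (1 : ℝ) ≤ a := by exact_mod_cast ha
  have hb' : (1 : ℝ) ≤ b := by exact_mod_cast hb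
  cases s <;> cases s' <;> simp only [if_true, if_false, mem_Ioc, mem_Ico,
    Bool.false_eq_true] at hx hx'
  · refine ⟨rfl, ?_⟩
    have h1 : (a : ℝ) < b + 1 := by linarith [hx.1, hx.2, hx'.1, hx'.2]
    have h2 : (b : ℝ) < a + 1 := by linarith [hx.1, hx.2, hx'.1, hx'.2]
    have h1' : a < b + 1 := by exact_mod_cast h1
    have h2' : b < a + 1 := by exact_mod_cast h2
    omega
  · exfalso; linarith [hx.1, hx.2, hx'.1, hx'.2]
  · exfalso; linarith [hx.1, hx.2, hx'.1, hx'.2]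
  · refine ⟨rfl, ?_⟩
    have h1 : (a : ℝ) < b + 1 := by linarith [hx.1, hx.2, hx'.1, hx'.2]
    have h2 : (b : ℝ) < a + 1 := by linarith [hx.1, hx.2, hx'.1, hx'.2]
    have h1' : a < b + 1 := by exact_mod_cast h1
    have h2' : b < a + 1 := by exact_mod_cast h2
    omega

lemma sq_bound {s : Bool} {a : ℕ} (ha : 1 ≤ a) {x : ℝ}
    (hx : x ∈ (if s then Ioc ((a : ℝ) - 1) a else Ico (-(a : ℝ)) (1 - (a : ℝ)))) :
    x ^ 2 ≤ (a : ℝ) ^ 2 := by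
  have ha' : (1 : ℝ) ≤ a := by exact_mod_cast ha
  cases s <;> simp only [Bool.false_eq_true, if_true, if_false, mem_Ioc, mem_Ico] at hx
  · exact sq_le_sq' hx.1 (by linarith [hx.2])
  · exact sq_le_sq' (by linarith [hx.1]) (by linarith [hx.2])

lemma cube_vol (s : Fin 3 → Bool) (p : ℕ × ℕ × ℕ) : volume (cube s p) = 1 := by
  rw [cube, volume_pi_pi]
  have : ∀ i : Fin 3, volume (if s i then Ioc ((q p i : ℝ) - 1) (q p i)
      else Ico (-(q p i : ℝ)) (1 - (q p i : ℝ))) = 1 := by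
    intro i
    by_cases h : s i
    · rw [if_pos h, Real.volume_Ioc, show (q p i : ℝ) - ((q p i : ℝ) - 1) = 1 by ring]
      norm_num
    · rw [if_neg h, Real.volume_Ico, show (1 : ℝ) - (q p i : ℝ) - -(q p i : ℝ) = 1 by ring]
      norm_num
  simp [this]

lemma cube_measurable (s : Fin 3 → Bool) (p : ℕ × ℕ × ℕ) : MeasurableSet (cube s p) := by
  apply MeasurableSet.univ_pi
  intro i
  by_cases h : s i <;> simp [h, measurableSet_Ioc, measurableSet_Ico]

end CFUB

open CFUB

theorem counting_function_upper_bound (lam : ℝ) (hlam : 0 < lam) :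
    (Nat.card {p : ℕ × ℕ × ℕ // 1 ≤ p.1 ∧ 1 ≤ p.2.1 ∧ 1 ≤ p.2.2 ∧
        ((p.1 : ℝ)^2 + (p.2.1 : ℝ)^2 + (p.2.2 : ℝ)^2) < lam} : ℝ)
      ≤ π / 6 * lam ^ ((3 : ℝ) / 2) := by
  set A : Set (ℕ × ℕ × ℕ) := {p | 1 ≤ p.1 ∧ 1 ≤ p.2.1 ∧ 1 ≤ p.2.2 ∧
      ((p.1 : ℝ)^2 + (p.2.1 : ℝ)^2 + (p.2.2 : ℝ)^2) < lam} with hA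
  -- basic facts about members of A
  have hq1 : ∀ p ∈ A, ∀ i, 1 ≤ q p i := by
    rintro p ⟨h1, h2, h3, _⟩ i
    fin_cases i <;> simpa [q]
  have hqsum : ∀ p ∈ A, ∑ i, ((q p i : ℝ)) ^ 2 < lam := by
    rintro p ⟨h1, h2, h3, h4⟩
    simpa [q, Fin.sum_univ_three] using h4
  -- finiteness
  have hfin : A.Finite := by
    apply Set.Finite.subset (((Set.finite_Iio (⌈lam⌉₊)).prod
      ((Set.finite_Iio (⌈lam⌉₊)).prod (Set.finite_Iio (⌈lam⌉₊)))))
    rintro p ⟨h1, h2, h3, h4⟩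
    have key : ∀ n : ℕ, 1 ≤ n → (n : ℝ) ^ 2 < lam → n ∈ Set.Iio (⌈lam⌉₊) := by
      intro n hn hsq
      have h1' : (1 : ℝ) ≤ n := by exact_mod_cast hn
      have : (n : ℝ) < lam := by nlinarith
      exact Nat.lt_ceil.mpr this
    have s1 : (0:ℝ) ≤ (p.1 : ℝ)^2 := sq_nonneg _
    have s2 : (0:ℝ) ≤ (p.2.1 : ℝ)^2 := sq_nonneg _
    have s3 : (0:ℝ) ≤ (p.2.2 : ℝ)^2 := sq_nonneg _
    exact ⟨key p.1 h1 (by linarith), key p.2.1 h2 (by linarith), key p.2.2 h3 (by linarith)⟩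
  haveI : Fintype A := hfin.fintype
  set N : ℕ := Nat.card A with hN
  -- the region
  set B : Set (Fin 3 → ℝ) := {x | ∑ i, (x i) ^ 2 < lam} with hB
  have hBmeas : MeasurableSet B :=
    measurableSet_lt (by fun_prop) measurable_const
  -- the family of cubes
  set f : (Fin 3 → Bool) × A → Set (Fin 3 → ℝ) := fun t => cube t.1 t.2 with hf
  have hsub : ∀ t, f t ⊆ B := by
    rintro ⟨s, p, hp⟩ x hx
    simp only [hf, cube, mem_univ_pi] at hx
    have key : ∀ i, (x i) ^ 2 ≤ ((q p i : ℝ)) ^ 2 := fun i => sq_bound (hq1 p hp i) (hx i)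
    calc ∑ i, (x i) ^ 2 ≤ ∑ i, ((q p i : ℝ)) ^ 2 := Finset.sum_le_sum fun i _ => key i
      _ < lam := hqsum p hp
  have hdisj : Pairwise (Function.onFun Disjoint f) := by
    rintro ⟨s, p, hp⟩ ⟨s', p', hp'⟩ hne
    rw [Function.onFun, Set.disjoint_left]
    intro x hx hx'
    simp only [hf, cube, mem_univ_pi] at hx hx'
    have key : ∀ i, s i = s' i ∧ q p i = q p' i := fun i =>
      interval_lemma (hq1 p hp i) (hq1 p' hp' i) (hx i) (hx' i)
    apply hne
    have hs : s = s' := funext fun i => (key i).1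
    have hp2 : p = p' := q_inj (funext fun i => (key i).2)
    subst hs; subst hp2; rfl
  -- measure comparison
  have hunion : volume (⋃ t, f t) = ∑' t, volume (f t) :=
    measure_iUnion hdisj fun t => cube_measurable t.1 t.2
  have htsum : ∑' t, volume (f t) = ((8 * N : ℕ) : ENNReal) := by
    have h1 : ∀ t, volume (f t) = 1 := fun t => cube_vol t.1 t.2
    calc ∑' t, volume (f t) = ∑' _t : (Fin 3 → Bool) × A, (1 : ENNReal) := tsum_congr h1
      _ = ∑ _t : (Fin 3 → Bool) × A, (1 : ENNReal) := tsum_fintype _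
      _ = (Fintype.card ((Fin 3 → Bool) × A) : ENNReal) := by
          rw [Finset.sum_const, Finset.card_univ, nsmul_eq_mul, mul_one]
      _ = ((8 * N : ℕ) : ENNReal) := by
          rw [Fintype.card_prod]
          norm_num [hN, Nat.card_eq_fintype_card]
  -- volume of B
  have hBvol : volume B = ENNReal.ofReal (4 / 3 * π * lam ^ ((3:ℝ)/2)) := by
    have hmp := EuclideanSpace.volume_preserving_symm_measurableEquiv_toLp (Fin 3)
    have hpre : (MeasurableEquiv.toLp 2 (Fin 3 → ℝ)).symm ⁻¹' B
        = Metric.ball (0 : EuclideanSpace ℝ (Fin 3)) (Real.sqrt lam) := by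
      ext y
      rw [mem_preimage, Metric.mem_ball, dist_zero_right, EuclideanSpace.norm_eq]
      have hnn : (0:ℝ) ≤ ∑ i, ‖y i‖ ^ 2 := Finset.sum_nonneg fun i _ => sq_nonneg _
      constructor
      · intro hy
        rw [Real.sqrt_lt_sqrt_iff hnn]
        simpa [hB, Real.norm_eq_abs, sq_abs] using hy
      · intro hy
        have := (Real.sqrt_lt_sqrt_iff hnn).mp hy
        simpa [hB, Real.norm_eq_abs, sq_abs] using this
    have := hmp.measure_preimage hBmeas.nullMeasurableSet
    rw [hpre, EuclideanSpace.volume_ball] at this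
    rw [← this]
    have hcard : Fintype.card (Fin 3) = 3 := by simp
    rw [hcard]
    have hG : Real.Gamma ((3:ℕ) / 2 + 1) = 3 / 4 * Real.sqrt π := by
      have h32 : ((3:ℕ):ℝ) / 2 + 1 = (3:ℝ)/2 + 1 := by norm_num
      rw [h32, Real.Gamma_add_one (by norm_num)]
      have h12 : (3:ℝ)/2 = 1/2 + 1 := by norm_num
      rw [h12, Real.Gamma_add_one (by norm_num), Real.Gamma_one_half_eq]
      ring
    rw [hG]
    have hsπ : (0:ℝ) < Real.sqrt π := Real.sqrt_pos.mpr Real.pi_pos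
    have h1 : Real.sqrt π ^ 3 / (3 / 4 * Real.sqrt π) = 4 / 3 * π := by
      rw [show Real.sqrt π ^ 3 = π * Real.sqrt π by
        rw [pow_succ, sq_sqrt Real.pi_pos.le]]
      field_simp
    rw [h1, ← ENNReal.ofReal_pow (Real.sqrt_nonneg _), ← ENNReal.ofReal_mul (by positivity)]
    congr 1
    rw [show Real.sqrt lam ^ 3 = lam ^ ((3:ℝ)/2) by
      rw [Real.sqrt_eq_rpow, ← Real.rpow_natCast (lam ^ ((1:ℝ)/2)) 3,
        ← Real.rpow_mul hlam.le]
      norm_num]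
    ring
  have hle : ((8 * N : ℕ) : ENNReal) ≤ ENNReal.ofReal (4 / 3 * π * lam ^ ((3:ℝ)/2)) := by
    rw [← htsum, ← hunion, ← hBvol]
    exact measure_mono (Set.iUnion_subset hsub)
  -- back to the reals
  have hreal : (8 * N : ℝ) ≤ 4 / 3 * π * lam ^ ((3:ℝ)/2) := by
    rw [← ENNReal.ofReal_natCast] at hle
    have := (ENNReal.ofReal_le_ofReal_iff (by positivity)).mp hle
    exact_mod_cast this
  have hNA : Nat.card {p : ℕ × ℕ × ℕ // 1 ≤ p.1 ∧ 1 ≤ p.2.1 ∧ 1 ≤ p.2.2 ∧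
      ((p.1 : ℝ)^2 + (p.2.1 : ℝ)^2 + (p.2.2 : ℝ)^2) < lam} = N := rfl
  rw [hNA]
  push_cast at hreal ⊢
  linarith
end

section
/- The volume of the region C_λ = {(x,y,z) ∈ ℝ³ : x²+y²+z² < λ, x > 1, y > 1, z > 1} is strictly greater than (π/6)λ^{3/2} − (3π/4)λ + 3√(λ−2) − 1, for every λ ≥ 3. -/
open Real MeasureTheory

open Real MeasureTheory Set intervalIntegral

lemma int01 : ∫ x in (0:ℝ)..1, Real.sqrt (1 - x^2) = π/4 := by
  have hint : IntervalIntegrable (fun x : ℝ => Real.sqrt (1 - x^2)) volume (-1) 0 ∧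
      IntervalIntegrable (fun x : ℝ => Real.sqrt (1 - x^2)) volume 0 1 := by
    constructor <;> exact (Real.continuous_sqrt.comp (by continuity)).intervalIntegrable _ _
  have heven : ∫ x in (-1:ℝ)..0, Real.sqrt (1 - x^2) = ∫ x in (0:ℝ)..1, Real.sqrt (1-x^2) := by
    have := intervalIntegral.integral_comp_neg (a := (0:ℝ)) (b := 1) (fun y : ℝ => Real.sqrt (1 - y^2))
    simpa using this.symm
  have hadd := intervalIntegral.integral_add_adjacent_intervals hint.1 hint.2
  have hfull := integral_sqrt_one_sub_sq
  rw [← hadd] at hfull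
  linarith [heven]

lemma int_qd (r : ℝ) (hr : 0 < r) : ∫ y in (0:ℝ)..r, Real.sqrt (r^2 - y^2) = π/4 * r^2 := by
  have h := intervalIntegral.integral_comp_mul_left (a := (0:ℝ)) (b := 1)
    (fun y : ℝ => Real.sqrt (r^2 - y^2)) (ne_of_gt hr)
  have h2 : ∀ x : ℝ, Real.sqrt (r^2 - (r*x)^2) = r * Real.sqrt (1 - x^2) := by
    intro x
    rw [show r^2 - (r*x)^2 = r^2 * (1 - x^2) by ring, Real.sqrt_mul (sq_nonneg r),
      Real.sqrt_sq hr.le]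
  simp only [h2, mul_zero, mul_one] at h
  rw [intervalIntegral.integral_const_mul, int01] at h
  have : (∫ y in (0:ℝ)..r, Real.sqrt (r^2 - y^2)) = r * (r * (π/4)) := by
    rw [smul_eq_mul] at h
    have hr' : r ≠ 0 := ne_of_gt hr
    calc (∫ y in (0:ℝ)..r, Real.sqrt (r^2 - y^2))
        = r * (r⁻¹ * ∫ y in (0:ℝ)..r, Real.sqrt (r^2 - y^2)) := by field_simp
      _ = r * (r * (π/4)) := by rw [← h]
  rw [this]; ring

lemma slice_set (a c : ℝ) (ha : 0 ≤ a) : {z : ℝ | a < z ∧ z^2 < c} = Set.Ioo a (Real.sqrt c) := by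
  ext z
  simp only [Set.mem_setOf_eq, Set.mem_Ioo]
  constructor
  · rintro ⟨h1, h2⟩
    exact ⟨h1, (Real.lt_sqrt (le_of_lt (lt_of_le_of_lt ha h1))).2 h2⟩
  · rintro ⟨h1, h2⟩
    exact ⟨h1, (Real.lt_sqrt (le_of_lt (lt_of_le_of_lt ha h1))).1 h2⟩

lemma slice_vol (a c : ℝ) (ha : 0 ≤ a) :
    volume {z : ℝ | a < z ∧ z^2 < c} = ENNReal.ofReal (Real.sqrt c - a) := by
  rw [slice_set a c ha, Real.volume_Ioo]

lemma qd_meas (c : ℝ) : MeasurableSet {q : ℝ × ℝ | 0 < q.1 ∧ 0 < q.2 ∧ q.1^2 + q.2^2 < c} := by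
  rw [Set.setOf_and, Set.setOf_and]
  exact (measurableSet_lt measurable_const measurable_fst).inter
    ((measurableSet_lt measurable_const measurable_snd).inter
      (measurableSet_lt (by fun_prop) measurable_const))

lemma qd_vol (c : ℝ) (hc : 0 < c) :
    volume {q : ℝ × ℝ | 0 < q.1 ∧ 0 < q.2 ∧ q.1^2 + q.2^2 < c} = ENNReal.ofReal (π/4*c) := by
  rw [MeasureTheory.Measure.volume_eq_prod, Measure.prod_apply (qd_meas c)]
  have hslice : ∀ x : ℝ,
      volume (Prod.mk x ⁻¹' {q : ℝ × ℝ | 0 < q.1 ∧ 0 < q.2 ∧ q.1^2 + q.2^2 < c})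
        = (Set.Ioo (0:ℝ) (Real.sqrt c)).indicator
            (fun x => ENNReal.ofReal (Real.sqrt (c - x^2))) x := by
    intro x
    by_cases hx : x ∈ Set.Ioo (0:ℝ) (Real.sqrt c)
    · rw [Set.indicator_of_mem hx]
      have hpre : Prod.mk x ⁻¹' {q : ℝ × ℝ | 0 < q.1 ∧ 0 < q.2 ∧ q.1^2 + q.2^2 < c}
          = {z : ℝ | 0 < z ∧ z^2 < c - x^2} := by
        ext z
        simp only [Set.mem_preimage, Set.mem_setOf_eq]
        constructor
        · rintro ⟨_, h2, h3⟩; exact ⟨h2, by linarith⟩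
        · rintro ⟨h2, h3⟩; exact ⟨hx.1, h2, by linarith⟩
      rw [hpre, slice_vol 0 (c - x^2) le_rfl, sub_zero]
    · rw [Set.indicator_of_notMem hx]
      have hpre : Prod.mk x ⁻¹' {q : ℝ × ℝ | 0 < q.1 ∧ 0 < q.2 ∧ q.1^2 + q.2^2 < c} = ∅ := by
        ext z
        simp only [Set.mem_preimage, Set.mem_setOf_eq, Set.mem_empty_iff_false, iff_false]
        rintro ⟨h1, h2, h3⟩
        simp only [Set.mem_Ioo, not_and_or, not_lt] at hx
        rcases hx with h | h
        · linarith
        · have hx2 : c ≤ x^2 := by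
            nlinarith [Real.sq_sqrt hc.le, Real.sqrt_nonneg c]
          nlinarith
      rw [hpre, measure_empty]
  rw [lintegral_congr hslice, lintegral_indicator measurableSet_Ioo _]
  have hcont : Continuous fun x : ℝ => Real.sqrt (c - x^2) :=
    Real.continuous_sqrt.comp (by continuity)
  rw [← ofReal_integral_eq_lintegral_ofReal
      ((hcont.integrableOn_Icc (a := 0) (b := Real.sqrt c)).mono_set Set.Ioo_subset_Icc_self) (Filter.Eventually.of_forall fun x => Real.sqrt_nonneg _)]
  congr 1
  rw [← MeasureTheory.integral_Ioc_eq_integral_Ioo,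
    ← intervalIntegral.integral_of_le (Real.sqrt_nonneg c)]
  have := int_qd (Real.sqrt c) (Real.sqrt_pos.2 hc)
  rw [Real.sq_sqrt hc.le] at this
  rw [this]
lemma core_meas (lam : ℝ) (I : Set ℝ) (hI : MeasurableSet I) :
    MeasurableSet {p : ℝ × ℝ × ℝ | p.1 ∈ I ∧ p.1^2 + p.2.1^2 + p.2.2^2 < lam
      ∧ 0 < p.2.1 ∧ 0 < p.2.2} := by
  rw [Set.setOf_and, Set.setOf_and, Set.setOf_and]
  exact (measurable_fst hI).inter
    ((measurableSet_lt (by fun_prop) measurable_const).inter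
      ((measurableSet_lt measurable_const (by fun_prop)).inter
        (measurableSet_lt measurable_const (by fun_prop))))

lemma vol3_core (lam : ℝ) (I : Set ℝ) (hI : MeasurableSet I)
    (hpos : ∀ x ∈ I, 0 < x ∧ x^2 < lam)
    (hint : IntegrableOn (fun x : ℝ => π/4*(lam - x^2)) I volume) :
    volume {p : ℝ × ℝ × ℝ | p.1 ∈ I ∧ p.1^2 + p.2.1^2 + p.2.2^2 < lam
      ∧ 0 < p.2.1 ∧ 0 < p.2.2}
      = ENNReal.ofReal (∫ x in I, π/4*(lam - x^2)) := by
  rw [MeasureTheory.Measure.volume_eq_prod, Measure.prod_apply (core_meas lam I hI)]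
  have hslice : ∀ x : ℝ,
      volume (Prod.mk x ⁻¹' {p : ℝ × ℝ × ℝ | p.1 ∈ I ∧ p.1^2 + p.2.1^2 + p.2.2^2 < lam
        ∧ 0 < p.2.1 ∧ 0 < p.2.2})
      = I.indicator (fun x => ENNReal.ofReal (π/4*(lam - x^2))) x := by
    intro x
    by_cases hx : x ∈ I
    · rw [Set.indicator_of_mem hx]
      have hpre : Prod.mk x ⁻¹' {p : ℝ × ℝ × ℝ | p.1 ∈ I ∧ p.1^2 + p.2.1^2 + p.2.2^2 < lam
          ∧ 0 < p.2.1 ∧ 0 < p.2.2}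
          = {q : ℝ × ℝ | 0 < q.1 ∧ 0 < q.2 ∧ q.1^2 + q.2^2 < lam - x^2} := by
        ext q
        simp only [Set.mem_preimage, Set.mem_setOf_eq]
        constructor
        · rintro ⟨_, h2, h3, h4⟩; exact ⟨h3, h4, by linarith⟩
        · rintro ⟨h2, h3, h4⟩; exact ⟨hx, by linarith, h2, h3⟩
      rw [hpre, qd_vol _ (by linarith [(hpos x hx).2])]
    · rw [Set.indicator_of_notMem hx]
      have hpre : Prod.mk x ⁻¹' {p : ℝ × ℝ × ℝ | p.1 ∈ I ∧ p.1^2 + p.2.1^2 + p.2.2^2 < lam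
          ∧ 0 < p.2.1 ∧ 0 < p.2.2} = ∅ := by
        ext q
        simp only [Set.mem_preimage, Set.mem_setOf_eq, Set.mem_empty_iff_false, iff_false]
        rintro ⟨h1, -⟩; exact hx h1
      rw [hpre, measure_empty]
  rw [lintegral_congr hslice, lintegral_indicator hI _,
    ← ofReal_integral_eq_lintegral_ofReal hint
      ((ae_restrict_iff' hI).2 (Filter.Eventually.of_forall fun x hx => by
        have h2 := (hpos x hx).2
        simp only [Pi.zero_apply]
        nlinarith [Real.pi_pos]))]

lemma oct_vol (lam : ℝ) (hlam : 3 ≤ lam) :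
    volume {p : ℝ × ℝ × ℝ | p.1^2 + p.2.1^2 + p.2.2^2 < lam
      ∧ 0 < p.1 ∧ 0 < p.2.1 ∧ 0 < p.2.2}
      = ENNReal.ofReal (π/6 * (lam * Real.sqrt lam)) := by
  have hl0 : (0:ℝ) < lam := by linarith
  have hs0 : 0 < Real.sqrt lam := Real.sqrt_pos.2 hl0
  have hset : {p : ℝ × ℝ × ℝ | p.1^2 + p.2.1^2 + p.2.2^2 < lam
      ∧ 0 < p.1 ∧ 0 < p.2.1 ∧ 0 < p.2.2}
      = {p : ℝ × ℝ × ℝ | p.1 ∈ Set.Ioo (0:ℝ) (Real.sqrt lam)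
        ∧ p.1^2 + p.2.1^2 + p.2.2^2 < lam ∧ 0 < p.2.1 ∧ 0 < p.2.2} := by
    ext p
    simp only [Set.mem_setOf_eq, Set.mem_Ioo]
    constructor
    · rintro ⟨h1, h2, h3, h4⟩
      exact ⟨⟨h2, (Real.lt_sqrt h2.le).2 (by nlinarith)⟩, h1, h3, h4⟩
    · rintro ⟨⟨h2, _⟩, h1, h3, h4⟩
      exact ⟨h1, h2, h3, h4⟩
  rw [hset, vol3_core lam _ measurableSet_Ioo
    (fun x hx => ⟨hx.1, by nlinarith [(Real.lt_sqrt hx.1.le).1 hx.2]⟩)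
    (((continuous_const.mul ((continuous_const.sub (continuous_pow 2)))).integrableOn_Icc
      (a := 0) (b := Real.sqrt lam)).mono_set Set.Ioo_subset_Icc_self)]
  congr 1
  rw [← MeasureTheory.integral_Ioc_eq_integral_Ioo,
    ← intervalIntegral.integral_of_le hs0.le]
  have : ∫ x in (0:ℝ)..(Real.sqrt lam), π/4*(lam - x^2)
      = π/4 * (lam * Real.sqrt lam - (Real.sqrt lam)^3 / 3) := by
    rw [intervalIntegral.integral_const_mul,
      intervalIntegral.integral_sub intervalIntegrable_const
        (intervalIntegral.intervalIntegrable_pow 2),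
      integral_pow, intervalIntegral.integral_const]
    norm_num [mul_comm]
  rw [this]
  have h3 : (Real.sqrt lam)^3 = lam * Real.sqrt lam := by
    rw [pow_succ, Real.sq_sqrt hl0.le]
  rw [h3]; ring

lemma sx_vol (lam : ℝ) (hlam : 3 ≤ lam) :
    volume {p : ℝ × ℝ × ℝ | p.1 ∈ Set.Ioc (0:ℝ) 1 ∧ p.1^2 + p.2.1^2 + p.2.2^2 < lam
      ∧ 0 < p.2.1 ∧ 0 < p.2.2}
      = ENNReal.ofReal (π/4 * lam - π/12) := by
  rw [vol3_core lam _ measurableSet_Ioc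
    (fun x hx => ⟨hx.1, by nlinarith [hx.1, hx.2]⟩)
    (((continuous_const.mul ((continuous_const.sub (continuous_pow 2)))).integrableOn_Icc
      (a := 0) (b := 1)).mono_set Set.Ioc_subset_Icc_self)]
  congr 1
  rw [← intervalIntegral.integral_of_le (by norm_num : (0:ℝ) ≤ 1)]
  rw [intervalIntegral.integral_const_mul,
    intervalIntegral.integral_sub intervalIntegrable_const
      (intervalIntegral.intervalIntegrable_pow 2),
    integral_pow, intervalIntegral.integral_const]
  norm_num
  ring

lemma mp12 : MeasurePreserving (fun p : ℝ × ℝ × ℝ => (p.2.1, p.1, p.2.2)) volume volume := by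
  have hassoc : MeasurePreserving (MeasurableEquiv.prodAssoc : (ℝ × ℝ) × ℝ ≃ᵐ ℝ × ℝ × ℝ)
      volume volume := volume_preserving_prodAssoc
  have hswap : MeasurePreserving (fun q : (ℝ × ℝ) × ℝ => (Prod.swap q.1, q.2))
      (volume : Measure ((ℝ × ℝ) × ℝ)) volume := by
    have h1 : MeasurePreserving (Prod.swap : ℝ × ℝ → ℝ × ℝ) volume volume := by
      rw [MeasureTheory.Measure.volume_eq_prod]
      exact Measure.measurePreserving_swap
    have := h1.prod (MeasurePreserving.id (volume : Measure ℝ))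
    rw [MeasureTheory.Measure.volume_eq_prod (α := ℝ × ℝ) (β := ℝ)]
    exact this
  have hcomp := (hassoc.comp hswap).comp (hassoc.symm MeasurableEquiv.prodAssoc)
  convert hcomp using 1
  all_goals rfl

lemma mp23 : MeasurePreserving (fun p : ℝ × ℝ × ℝ => (p.1, p.2.2, p.2.1)) volume volume := by
  have h1 : MeasurePreserving (Prod.swap : ℝ × ℝ → ℝ × ℝ) volume volume := by
    rw [MeasureTheory.Measure.volume_eq_prod]
    exact Measure.measurePreserving_swap
  have := (MeasurePreserving.id (volume : Measure ℝ)).prod h1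
  rw [MeasureTheory.Measure.volume_eq_prod (α := ℝ) (β := ℝ × ℝ)]
  exact this

lemma mp13 : MeasurePreserving (fun p : ℝ × ℝ × ℝ => (p.2.2, p.2.1, p.1)) volume volume := by
  have hcomp := (mp12.comp mp23).comp mp12
  convert hcomp using 1
  rfl


theorem volume_corner_region_lower_bound (lam : ℝ) (hlam : 3 ≤ lam) :
    (volume {p : ℝ × ℝ × ℝ | p.1^2 + p.2.1^2 + p.2.2^2 < lam ∧
        1 < p.1 ∧ 1 < p.2.1 ∧ 1 < p.2.2}).toReal
      > π / 6 * lam ^ ((3 : ℝ) / 2) - 3 * π / 4 * lam + 3 * Real.sqrt (lam - 2) - 1 := by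
  have hl0 : (0:ℝ) < lam := by linarith
  have hlam2 : (0:ℝ) ≤ lam - 2 := by linarith
  set C := {p : ℝ × ℝ × ℝ | p.1^2 + p.2.1^2 + p.2.2^2 < lam ∧
        1 < p.1 ∧ 1 < p.2.1 ∧ 1 < p.2.2} with hC
  set Oct := {p : ℝ × ℝ × ℝ | p.1^2 + p.2.1^2 + p.2.2^2 < lam
    ∧ 0 < p.1 ∧ 0 < p.2.1 ∧ 0 < p.2.2} with hOct
  set A := {p : ℝ × ℝ × ℝ | p.1 ∈ Set.Ioc (0:ℝ) 1 ∧ p.1^2 + p.2.1^2 + p.2.2^2 < lam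
    ∧ 0 < p.2.1 ∧ 0 < p.2.2} with hA
  set B := {p : ℝ × ℝ × ℝ | p.2.1 ∈ Set.Ioc (0:ℝ) 1 ∧ p.1^2 + p.2.1^2 + p.2.2^2 < lam
    ∧ 0 < p.1 ∧ 0 < p.2.2} with hB
  set D := {p : ℝ × ℝ × ℝ | p.2.2 ∈ Set.Ioc (0:ℝ) 1 ∧ p.1^2 + p.2.1^2 + p.2.2^2 < lam
    ∧ 0 < p.1 ∧ 0 < p.2.1} with hD
  -- measurability
  have hmA : MeasurableSet A := by rw [hA]; exact core_meas lam _ measurableSet_Ioc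
  have hmB : MeasurableSet B := by
    rw [hB, Set.setOf_and, Set.setOf_and, Set.setOf_and]
    exact ((by fun_prop : Measurable fun p : ℝ × ℝ × ℝ => p.2.1) measurableSet_Ioc).inter
      ((measurableSet_lt (by fun_prop) measurable_const).inter
        ((measurableSet_lt measurable_const (by fun_prop)).inter
          (measurableSet_lt measurable_const (by fun_prop))))
  have hmD : MeasurableSet D := by
    rw [hD, Set.setOf_and, Set.setOf_and, Set.setOf_and]
    exact ((by fun_prop : Measurable fun p : ℝ × ℝ × ℝ => p.2.2) measurableSet_Ioc).inter
      ((measurableSet_lt (by fun_prop) measurable_const).inter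
        ((measurableSet_lt measurable_const (by fun_prop)).inter
          (measurableSet_lt measurable_const (by fun_prop))))
  have hmU : MeasurableSet (A ∪ B ∪ D) := (hmA.union hmB).union hmD
  -- volume values
  have hoct : volume Oct = ENNReal.ofReal (π/6*(lam*Real.sqrt lam)) := by
    rw [hOct]; exact oct_vol lam hlam
  have ha : volume A = ENNReal.ofReal (π/4*lam - π/12) := by
    rw [hA]; exact sx_vol lam hlam
  have hb : volume B = volume A := by
    rw [hA, hB, ← mp12.measure_preimage (core_meas lam _ measurableSet_Ioc).nullMeasurableSet]
    congr 1
    ext p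
    simp only [Set.mem_preimage, Set.mem_setOf_eq]
    constructor
    · rintro ⟨h1, h2, h3, h4⟩; exact ⟨h1, by linarith, h3, h4⟩
    · rintro ⟨h1, h2, h3, h4⟩; exact ⟨h1, by linarith, h3, h4⟩
  have hd : volume D = volume A := by
    rw [hA, hD, ← mp13.measure_preimage (core_meas lam _ measurableSet_Ioc).nullMeasurableSet]
    congr 1
    ext p
    simp only [Set.mem_preimage, Set.mem_setOf_eq]
    constructor
    · rintro ⟨h1, h2, h3, h4⟩; exact ⟨h1, by linarith, h4, h3⟩
    · rintro ⟨h1, h2, h3, h4⟩; exact ⟨h1, by linarith, h4, h3⟩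
  -- boxes inside pairwise intersections
  have hsq : ∀ z : ℝ, 0 < z → z < Real.sqrt (lam - 2) → z^2 < lam - 2 := by
    intro z hz0 hz1
    nlinarith [Real.sq_sqrt hlam2]
  have hboxAB : Set.Ioc (0:ℝ) 1 ×ˢ (Set.Ioc (0:ℝ) 1 ×ˢ Set.Ioo (0:ℝ) (Real.sqrt (lam-2)))
      ⊆ A ∩ B := by
    rintro ⟨x, y, z⟩ hp
    simp only [Set.mem_prod, Set.mem_Ioc, Set.mem_Ioo] at hp
    obtain ⟨⟨hx0, hx1⟩, ⟨hy0, hy1⟩, hz0, hz1⟩ := hp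
    have hz2 := hsq z hz0 hz1
    exact ⟨⟨⟨hx0, hx1⟩, by nlinarith, hy0, hz0⟩, ⟨⟨hy0, hy1⟩, by nlinarith, hx0, hz0⟩⟩
  have hboxAD : Set.Ioc (0:ℝ) 1 ×ˢ (Set.Ioo (0:ℝ) (Real.sqrt (lam-2)) ×ˢ Set.Ioc (0:ℝ) 1)
      ⊆ A ∩ D := by
    rintro ⟨x, y, z⟩ hp
    simp only [Set.mem_prod, Set.mem_Ioc, Set.mem_Ioo] at hp
    obtain ⟨⟨hx0, hx1⟩, ⟨hy0, hy1⟩, hz0, hz1⟩ := hp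
    have hy2 := hsq y hy0 hy1
    exact ⟨⟨⟨hx0, hx1⟩, by nlinarith, hy0, hz0⟩, ⟨⟨hz0, hz1⟩, by nlinarith, hx0, hy0⟩⟩
  have hboxBD : Set.Ioo (0:ℝ) (Real.sqrt (lam-2)) ×ˢ (Set.Ioc (0:ℝ) 1 ×ˢ Set.Ioc (0:ℝ) 1)
      ⊆ B ∩ D := by
    rintro ⟨x, y, z⟩ hp
    simp only [Set.mem_prod, Set.mem_Ioc, Set.mem_Ioo] at hp
    obtain ⟨⟨hx0, hx1⟩, ⟨hy0, hy1⟩, hz0, hz1⟩ := hp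
    have hx2 := hsq x hx0 hx1
    exact ⟨⟨⟨hy0, hy1⟩, by nlinarith, hx0, hz0⟩, ⟨⟨hz0, hz1⟩, by nlinarith, hx0, hy0⟩⟩
  have hvAB : ENNReal.ofReal (Real.sqrt (lam-2)) ≤ volume (A ∩ B) := by
    refine le_trans (le_of_eq ?_) (measure_mono hboxAB)
    rw [MeasureTheory.Measure.volume_eq_prod, Measure.prod_prod,
      MeasureTheory.Measure.volume_eq_prod, Measure.prod_prod,
      Real.volume_Ioc, Real.volume_Ioo]
    simp
  have hvAD : ENNReal.ofReal (Real.sqrt (lam-2)) ≤ volume (A ∩ D) := by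
    refine le_trans (le_of_eq ?_) (measure_mono hboxAD)
    rw [MeasureTheory.Measure.volume_eq_prod, Measure.prod_prod,
      MeasureTheory.Measure.volume_eq_prod, Measure.prod_prod,
      Real.volume_Ioc, Real.volume_Ioo]
    simp
  have hvBD : ENNReal.ofReal (Real.sqrt (lam-2)) ≤ volume (B ∩ D) := by
    refine le_trans (le_of_eq ?_) (measure_mono hboxBD)
    rw [MeasureTheory.Measure.volume_eq_prod, Measure.prod_prod,
      MeasureTheory.Measure.volume_eq_prod, Measure.prod_prod,
      Real.volume_Ioo, Real.volume_Ioc]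
    simp
  -- triple intersection inside unit cube
  have htriple : volume (A ∩ B ∩ D) ≤ 1 := by
    have hsub3 : A ∩ B ∩ D ⊆ Set.Ioc (0:ℝ) 1 ×ˢ (Set.Ioc (0:ℝ) 1 ×ˢ Set.Ioc (0:ℝ) 1) := by
      rintro ⟨x, y, z⟩ ⟨⟨hA', hB'⟩, hD'⟩
      exact ⟨hA'.1, hB'.1, hD'.1⟩
    refine le_trans (measure_mono hsub3) (le_of_eq ?_)
    rw [MeasureTheory.Measure.volume_eq_prod, Measure.prod_prod,
      MeasureTheory.Measure.volume_eq_prod, Measure.prod_prod,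
      Real.volume_Ioc]
    simp
  -- partition of the octant
  have hOctU : Oct = C ∪ (A ∪ B ∪ D) := by
    ext ⟨x, y, z⟩
    simp only [hOct, hC, hA, hB, hD, Set.mem_union, Set.mem_setOf_eq, Set.mem_Ioc]
    constructor
    · rintro ⟨hs, hx, hy, hz⟩
      rcases le_or_gt x 1 with h1 | h1
      · exact Or.inr (Or.inl (Or.inl ⟨⟨hx, h1⟩, hs, hy, hz⟩))
      rcases le_or_gt y 1 with h2 | h2
      · exact Or.inr (Or.inl (Or.inr ⟨⟨hy, h2⟩, hs, hx, hz⟩))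
      rcases le_or_gt z 1 with h3 | h3
      · exact Or.inr (Or.inr ⟨⟨hz, h3⟩, hs, hx, hy⟩)
      · exact Or.inl ⟨hs, h1, h2, h3⟩
    · rintro (⟨hs, hx, hy, hz⟩ | ((⟨⟨hx, _⟩, hs, hy, hz⟩ | ⟨⟨hy, _⟩, hs, hx, hz⟩) |
        ⟨⟨hz, _⟩, hs, hx, hy⟩))
      exacts [⟨hs, by linarith, by linarith, by linarith⟩, ⟨hs, hx, hy, hz⟩,
        ⟨hs, hx, hy, hz⟩, ⟨hs, hx, hy, hz⟩]
  have hdisj : Disjoint C (A ∪ B ∪ D) := by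
    rw [Set.disjoint_left]
    rintro ⟨x, y, z⟩ hc hu
    simp only [hC, hA, hB, hD, Set.mem_union, Set.mem_setOf_eq, Set.mem_Ioc] at hc hu
    obtain ⟨-, h1, h2, h3⟩ := hc
    rcases hu with (⟨⟨_, h⟩, -⟩ | ⟨⟨_, h⟩, -⟩) | ⟨⟨_, h⟩, -⟩ <;> linarith
  have hsplit : volume Oct = volume C + volume (A ∪ B ∪ D) := by
    rw [hOctU]; exact measure_union hdisj hmU
  -- finiteness
  have hOctfin : volume Oct ≠ ⊤ := by rw [hoct]; exact ENNReal.ofReal_ne_top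
  have hsub : ∀ s : Set (ℝ × ℝ × ℝ), s ⊆ Oct → volume s ≠ ⊤ := fun s hs =>
    ne_top_of_le_ne_top hOctfin (measure_mono hs)
  have hAO : A ⊆ Oct := by
    rintro ⟨x, y, z⟩ hp
    simp only [hA, hOct, Set.mem_setOf_eq, Set.mem_Ioc] at hp ⊢
    exact ⟨hp.2.1, hp.1.1, hp.2.2⟩
  have hBO : B ⊆ Oct := by
    rintro ⟨x, y, z⟩ hp
    simp only [hB, hOct, Set.mem_setOf_eq, Set.mem_Ioc] at hp ⊢
    exact ⟨hp.2.1, hp.2.2.1, hp.1.1, hp.2.2.2⟩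
  have hDO : D ⊆ Oct := by
    rintro ⟨x, y, z⟩ hp
    simp only [hD, hOct, Set.mem_setOf_eq, Set.mem_Ioc] at hp ⊢
    exact ⟨hp.2.1, hp.2.2.1, hp.2.2.2, hp.1.1⟩
  have hCO : C ⊆ Oct := by
    rintro ⟨x, y, z⟩ hp
    simp only [hC, hOct, Set.mem_setOf_eq] at hp ⊢
    exact ⟨hp.1, by linarith [hp.2.1], by linarith [hp.2.2.1], by linarith [hp.2.2.2]⟩
  have hABO : A ∪ B ⊆ Oct := Set.union_subset hAO hBO
  have hUO : A ∪ B ∪ D ⊆ Oct := Set.union_subset hABO hDO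
  -- inclusion-exclusion
  have e1 := measure_union_add_inter (μ := volume) A hmB
  have e2 := measure_union_add_inter (μ := volume) (A ∪ B) hmD
  have e3 := measure_union_add_inter (μ := volume) (A ∩ D) (hmB.inter hmD)
  have hr1 : (A ∪ B) ∩ D = (A ∩ D) ∪ (B ∩ D) := Set.union_inter_distrib_right A B D
  have hr2 : (A ∩ D) ∩ (B ∩ D) = A ∩ B ∩ D := by
    ext p; simp only [Set.mem_inter_iff]; tauto
  rw [hr1] at e2
  rw [hr2] at e3
  -- pass to real numbers
  have E1 : (volume (A ∪ B)).toReal + (volume (A ∩ B)).toReal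
      = (volume A).toReal + (volume B).toReal := by
    rw [← ENNReal.toReal_add (hsub _ hABO) (hsub _ ((Set.inter_subset_left).trans hAO)),
      ← ENNReal.toReal_add (hsub _ hAO) (hsub _ hBO), e1]
  have E2 : (volume (A ∪ B ∪ D)).toReal + (volume ((A ∩ D) ∪ (B ∩ D))).toReal
      = (volume (A ∪ B)).toReal + (volume D).toReal := by
    rw [← ENNReal.toReal_add (hsub _ hUO) (hsub _ (Set.union_subset
        ((Set.inter_subset_left).trans hAO) ((Set.inter_subset_left).trans hBO))),
      ← ENNReal.toReal_add (hsub _ hABO) (hsub _ hDO), e2]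
  have E3 : (volume ((A ∩ D) ∪ (B ∩ D))).toReal + (volume (A ∩ B ∩ D)).toReal
      = (volume (A ∩ D)).toReal + (volume (B ∩ D)).toReal := by
    rw [← ENNReal.toReal_add (hsub _ (Set.union_subset
        ((Set.inter_subset_left).trans hAO) ((Set.inter_subset_left).trans hBO)))
        (hsub _ (((Set.inter_subset_left).trans (Set.inter_subset_left)).trans hAO)),
      ← ENNReal.toReal_add (hsub _ ((Set.inter_subset_left).trans hAO))
        (hsub _ ((Set.inter_subset_left).trans hBO)), e3]
  have ES : (volume Oct).toReal = (volume C).toReal + (volume (A ∪ B ∪ D)).toReal := by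
    rw [hsplit, ENNReal.toReal_add (hsub _ hCO) (hsub _ hUO)]
  -- numeric values
  have hOctR : (volume Oct).toReal = π/6*(lam*Real.sqrt lam) := by
    rw [hoct]; exact ENNReal.toReal_ofReal (by positivity)
  have hAR : (volume A).toReal = π/4*lam - π/12 := by
    rw [ha]; exact ENNReal.toReal_ofReal (by nlinarith [Real.pi_pos])
  have hBR : (volume B).toReal = π/4*lam - π/12 := by rw [hb]; exact hAR
  have hDR : (volume D).toReal = π/4*lam - π/12 := by rw [hd]; exact hAR
  have hABR : Real.sqrt (lam-2) ≤ (volume (A ∩ B)).toReal := by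
    calc Real.sqrt (lam-2) = (ENNReal.ofReal (Real.sqrt (lam-2))).toReal :=
          (ENNReal.toReal_ofReal (Real.sqrt_nonneg _)).symm
      _ ≤ _ := ENNReal.toReal_mono (hsub _ ((Set.inter_subset_left).trans hAO)) hvAB
  have hADR : Real.sqrt (lam-2) ≤ (volume (A ∩ D)).toReal := by
    calc Real.sqrt (lam-2) = (ENNReal.ofReal (Real.sqrt (lam-2))).toReal :=
          (ENNReal.toReal_ofReal (Real.sqrt_nonneg _)).symm
      _ ≤ _ := ENNReal.toReal_mono (hsub _ ((Set.inter_subset_left).trans hAO)) hvAD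
  have hBDR : Real.sqrt (lam-2) ≤ (volume (B ∩ D)).toReal := by
    calc Real.sqrt (lam-2) = (ENNReal.ofReal (Real.sqrt (lam-2))).toReal :=
          (ENNReal.toReal_ofReal (Real.sqrt_nonneg _)).symm
      _ ≤ _ := ENNReal.toReal_mono (hsub _ ((Set.inter_subset_left).trans hBO)) hvBD
  have htR : (volume (A ∩ B ∩ D)).toReal ≤ 1 := by
    have := ENNReal.toReal_mono ENNReal.one_ne_top htriple
    simpa using this
  -- finish
  have hrpow : lam ^ ((3:ℝ)/2) = lam * Real.sqrt lam := by
    rw [show (3:ℝ)/2 = 1 + 1/2 by norm_num, Real.rpow_add hl0, Real.rpow_one,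
      ← Real.sqrt_eq_rpow]
  rw [hrpow]
  linarith [E1, E2, E3, ES, hOctR, hAR, hBR, hDR, hABR, hADR, hBDR, htR, Real.pi_pos]
end

section
/- If λ ≥ 3 is real and k is a positive integer such that k ≤ (3/(4π))λ^{3/2} and k > (π/6)λ^{3/2} − (3π/4)λ + 3√(λ−2), then λ ≤ 48.7. -/
set_option maxHeartbeats 1000000


open Real

theorem lambda_le_48_7 (lam : ℝ) (hlam : 3 ≤ lam) (k : ℕ) (hk : 1 ≤ k)
    (h1 : (k : ℝ) ≤ 3 / (4 * π) * lam ^ ((3 : ℝ) / 2))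
    (h2 : (k : ℝ) > π / 6 * lam ^ ((3 : ℝ) / 2) - 3 * π / 4 * lam + 3 * Real.sqrt (lam - 2)) :
    lam ≤ 48.7 := by
  by_contra hcon
  push_neg at hcon
  have hlam0 : (0:ℝ) ≤ lam := by linarith
  have hpi1 := Real.pi_gt_d6
  have hpi2 := Real.pi_lt_d6
  have hpi0 : (0:ℝ) < π := Real.pi_pos
  set s := Real.sqrt lam with hsdef
  set t := Real.sqrt (lam - 2) with htdef
  have hs2 : s ^ 2 = lam := Real.sq_sqrt hlam0
  have ht2 : t ^ 2 = lam - 2 := Real.sq_sqrt (by linarith)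
  have hs0 : 0 ≤ s := Real.sqrt_nonneg _
  have ht0 : 0 ≤ t := Real.sqrt_nonneg _
  have h32 : lam ^ ((3 : ℝ) / 2) = s ^ 3 := by
    have e : lam ^ ((3 : ℝ) / 2) = (lam ^ ((1:ℝ)/2)) ^ (3:ℕ) := by
      rw [← Real.rpow_natCast (lam ^ ((1:ℝ)/2)) 3, ← Real.rpow_mul hlam0]
      norm_num
    rw [e, ← Real.sqrt_eq_rpow, ← hsdef]
  rw [h32] at h1 h2
  have hslb : (6.978 : ℝ) < s := by nlinarith
  have htlb : (6.833 : ℝ) < t := by nlinarith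
  have hkey : π / 6 * s ^ 3 - 3 * π / 4 * lam + 3 * t < 3 / (4 * π) * s ^ 3 := by linarith
  have hkey2 : π ^ 2 * s ^ 3 / 6 - 3 * (π ^ 2 * s ^ 2) / 4 + 3 * (π * t) < 3 / 4 * s ^ 3 := by
    have h := mul_lt_mul_of_pos_left hkey hpi0
    rw [← hs2] at h
    calc π ^ 2 * s ^ 3 / 6 - 3 * (π ^ 2 * s ^ 2) / 4 + 3 * (π * t)
        = π * (π / 6 * s ^ 3 - 3 * π / 4 * s ^ 2 + 3 * t) := by ring
      _ < π * (3 / (4 * π) * s ^ 3) := h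
      _ = 3 / 4 * s ^ 3 := by field_simp
  have hq : (9.8696 : ℝ) < π ^ 2 := by nlinarith
  have hq' : π ^ 2 < (9.8697 : ℝ) := by nlinarith
  have hs3pos : (0:ℝ) < s ^ 3 := by positivity
  have hs2pos : (0:ℝ) < s ^ 2 := by positivity
  have e1 : (9.8696 : ℝ) * s ^ 3 < π ^ 2 * s ^ 3 := by
    have := mul_pos (sub_pos.mpr hq) hs3pos; nlinarith
  have e2 : π ^ 2 * s ^ 2 < (9.8697 : ℝ) * s ^ 2 := by
    have := mul_pos (sub_pos.mpr hq') hs2pos; nlinarith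
  have e3 : (21.46 : ℝ) < π * t := by nlinarith
  have hcube : (0.894933 : ℝ) * s ^ 3 - 7.402275 * s ^ 2 + 64.38 > 0 := by
    have h' : (0:ℝ) ≤ s - 6.978 := by linarith
    nlinarith [mul_nonneg (mul_nonneg h' h') h', mul_nonneg h' h', h']
  linarith
end
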